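/- With the two-soliton collision setup, the map u₂ ↦ u_{{1},2} given by u_{{1},2} = e^{φ₁₂(u₁,u₂)}·((ζ₁*-ζ₂*)/(ζ₁-ζ₂*))·(u₂ - ((ζ₁-ζ₁*)/(ζ₁-ζ₂*))⟨u₂,u₁⟩u₁) (for fixed unit vector u₁ and fixed distinct ζ₁, ζ₂ with positive imaginary parts) is a bijection of the unit sphere of ℂ^m onto itself. -/

import Mathlib

open Complex Matrix BigOperators

noncomputable section

/-- Hermitian inner product on ℂ^m, linear in the first slot. -/
def herm {m : ℕ} (u v : Fin m → ℂ) : ℂ := ∑ a, u a * (starRingEnd ℂ) (v a)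

lemma herm_left {m : ℕ} (α β : ℂ) (x y z : Fin m → ℂ) :
    herm (fun a => α * x a + β * y a) z = α * herm x z + β * herm y z := by
  simp only [herm, Finset.mul_sum, ← Finset.sum_add_distrib]
  exact Finset.sum_congr rfl fun a _ => by ring

lemma herm_right {m : ℕ} (α β : ℂ) (x y z : Fin m → ℂ) :
    herm z (fun a => α * x a + β * y a) =
      (starRingEnd ℂ) α * herm z x + (starRingEnd ℂ) β * herm z y := by
  simp only [herm, Finset.mul_sum, ← Finset.sum_add_distrib, _root_.map_add, _root_.map_mul]
  exact Finset.sum_congr rfl fun a _ => by ring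

lemma herm_conj {m : ℕ} (x y : Fin m → ℂ) : (starRingEnd ℂ) (herm x y) = herm y x := by
  simp only [herm, _root_.map_sum, _root_.map_mul, Complex.conj_conj]
  exact Finset.sum_congr rfl fun a _ => by ring

lemma herm_self_eq {m : ℕ} (x : Fin m → ℂ) :
    herm x x = ((∑ a, Complex.normSq (x a) : ℝ) : ℂ) := by
  push_cast
  exact Finset.sum_congr rfl fun a _ => (Complex.mul_conj (x a))

lemma herm_cs {m : ℕ} (x y : Fin m → ℂ) (hx : herm x x = 1) (hy : herm y y = 1) :
    ‖herm x y‖ ^ 2 ≤ 1 := by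
  set s := herm x y with hs
  have hsc : ((‖s‖ ^ 2 : ℝ) : ℂ) = s * (starRingEnd ℂ) s := by
    rw [Complex.sq_norm]; exact (Complex.mul_conj s).symm
  have h1 : herm (fun a => (1:ℂ) * x a + (-s) * y a) (fun a => (1:ℂ) * x a + (-s) * y a)
      = ((1 - ‖s‖ ^ 2 : ℝ) : ℂ) := by
    rw [herm_left, herm_right, herm_right, hx, hy, ← hs, ← herm_conj x y, ← hs]
    rw [Complex.ofReal_sub, Complex.ofReal_one, hsc]
    simp only [_root_.map_one, _root_.map_neg]
    ring
  rw [herm_self_eq] at h1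
  have h2 : (∑ a, Complex.normSq ((1:ℂ) * x a + (-s) * y a)) = 1 - ‖s‖ ^ 2 := by
    exact_mod_cast h1
  have h3 : 0 ≤ ∑ a, Complex.normSq ((1:ℂ) * x a + (-s) * y a) :=
    Finset.sum_nonneg fun a _ => Complex.normSq_nonneg _
  linarith

set_option maxHeartbeats 2000000 in
theorem stmt14 {m : ℕ} (ζ₁ ζ₂ : ℂ) (h1 : 0 < ζ₁.im) (h2 : 0 < ζ₂.im) (hne : ζ₁ ≠ ζ₂)
    (u₁ : Fin m → ℂ) (hu1 : herm u₁ u₁ = 1) :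
    -- the two-soliton collision map v = u₂ ↦ u_{{1},2}, with e^{φ₁₂} depending on v
    let T : (Fin m → ℂ) → (Fin m → ℂ) := fun v a =>
      (((Real.sqrt ((‖(ζ₁ - ζ₂) / (ζ₁ - (starRingEnd ℂ) ζ₂)‖)^2 *
          (1 + ((ζ₁ - (starRingEnd ℂ) ζ₁) * (ζ₂ - (starRingEnd ℂ) ζ₂)).re /
            (‖ζ₁ - (starRingEnd ℂ) ζ₂‖)^2 *
            (‖herm u₁ v‖)^2)))⁻¹ : ℝ) : ℂ) *
        (((starRingEnd ℂ) ζ₁ - (starRingEnd ℂ) ζ₂) / (ζ₁ - (starRingEnd ℂ) ζ₂)) *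
        (v a - (ζ₁ - (starRingEnd ℂ) ζ₁) / (ζ₁ - (starRingEnd ℂ) ζ₂) *
          herm v u₁ * u₁ a)
    Set.BijOn T {v : Fin m → ℂ | herm v v = 1} {v : Fin m → ℂ | herm v v = 1} := by
  intro T
  have hT : ∀ (v : Fin m → ℂ) (a : Fin m), T v a =
      (((Real.sqrt ((‖(ζ₁ - ζ₂) / (ζ₁ - (starRingEnd ℂ) ζ₂)‖)^2 *
          (1 + ((ζ₁ - (starRingEnd ℂ) ζ₁) * (ζ₂ - (starRingEnd ℂ) ζ₂)).re /
            (‖ζ₁ - (starRingEnd ℂ) ζ₂‖)^2 *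
            (‖herm u₁ v‖)^2)))⁻¹ : ℝ) : ℂ) *
        (((starRingEnd ℂ) ζ₁ - (starRingEnd ℂ) ζ₂) / (ζ₁ - (starRingEnd ℂ) ζ₂)) *
        (v a - (ζ₁ - (starRingEnd ℂ) ζ₁) / (ζ₁ - (starRingEnd ℂ) ζ₂) *
          herm v u₁ * u₁ a) := fun v a => rfl
  clear_value T
  -- complex abbreviations
  set d : ℂ := ζ₁ - (starRingEnd ℂ) ζ₂ with hd_def
  set e : ℂ := (starRingEnd ℂ) ζ₁ - (starRingEnd ℂ) ζ₂ with he_def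
  set l : ℂ := (ζ₁ - (starRingEnd ℂ) ζ₁) / d with hl_def
  -- real abbreviations
  set A : ℝ := (‖(ζ₁ - ζ₂) / d‖)^2 with hA_def
  set K : ℝ := ((ζ₁ - (starRingEnd ℂ) ζ₁) * (ζ₂ - (starRingEnd ℂ) ζ₂)).re /
            (‖d‖)^2 with hK_def
  set K' : ℝ := 4 * ζ₁.im * ζ₂.im / (‖ζ₁ - ζ₂‖)^2 with hK'_def
  -- nonvanishing
  have hd0 : d ≠ 0 := by
    intro h
    have := congrArg Complex.im h
    simp [hd_def, Complex.sub_im, Complex.conj_im] at this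
    linarith
  have hdc0 : (starRingEnd ℂ) ζ₁ - ζ₂ ≠ 0 := by
    intro h
    have := congrArg Complex.im h
    simp [Complex.sub_im, Complex.conj_im] at this
    linarith
  have hzz : ζ₁ - ζ₂ ≠ 0 := sub_ne_zero.mpr hne
  have he0 : e ≠ 0 :=
    sub_ne_zero.mpr fun h => hne ((starRingEnd ℂ).injective h)
  have he_conj : e = (starRingEnd ℂ) (ζ₁ - ζ₂) := by rw [he_def, _root_.map_sub]
  have habse : ‖e‖ = ‖ζ₁ - ζ₂‖ := by rw [he_conj, Complex.norm_conj]
  -- basic complex coercion facts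
  clear_value d e l A K K'
  have habsc : ∀ z : ℂ, ((‖z‖ ^ 2 : ℝ) : ℂ) = z * (starRingEnd ℂ) z := fun z => by
    rw [Complex.sq_norm]; exact (Complex.mul_conj z).symm
  have hb : (ζ₁ - (starRingEnd ℂ) ζ₁) * (ζ₂ - (starRingEnd ℂ) ζ₂)
      = ((-(4 * ζ₁.im * ζ₂.im) : ℝ) : ℂ) := by
    rw [Complex.sub_conj, Complex.sub_conj]
    push_cast
    linear_combination (4 * (ζ₁.im:ℂ) * (ζ₂.im:ℂ)) * Complex.I_sq
  have hK_real : K = -(4 * ζ₁.im * ζ₂.im) / (‖d‖)^2 := by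
    rw [hK_def, hb]; norm_num
  have hA_real : A = (‖ζ₁ - ζ₂‖)^2 / (‖d‖)^2 := by
    rw [hA_def, norm_div, div_pow]
  have hnd : 0 < (‖d‖)^2 := pow_pos (norm_pos_iff.mpr hd0) 2
  have hnz : 0 < (‖ζ₁ - ζ₂‖)^2 := pow_pos (norm_pos_iff.mpr hzz) 2
  have habs_split : (‖ζ₁ - ζ₂‖)^2 + 4 * ζ₁.im * ζ₂.im = (‖d‖)^2 := by
    rw [hd_def]
    simp only [Complex.sq_norm, Complex.normSq_apply, Complex.sub_re, Complex.sub_im,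
      Complex.conj_re, Complex.conj_im]
    ring
  have hApos : 0 < A := by rw [hA_real]; positivity
  have hKneg : K < 0 := by
    rw [hK_real]
    apply div_neg_of_neg_of_pos _ hnd
    nlinarith
  have h1K : 1 + K = A := by
    rw [hK_real, hA_real]
    field_simp
    linarith [habs_split]
  have hK'pos : 0 ≤ K' := by rw [hK'_def]; positivity
  have hK'A : K' * A = -K := by
    rw [hK'_def, hA_real, hK_real]
    field_simp
  -- complex coercions of A, K, K'
  have hdd : ((‖d‖ ^ 2 : ℝ) : ℂ) = d * ((starRingEnd ℂ) ζ₁ - ζ₂) := by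
    rw [habsc d, hd_def, _root_.map_sub, Complex.conj_conj]
  have hKc : ((K : ℝ) : ℂ) = ((ζ₁ - (starRingEnd ℂ) ζ₁) * (ζ₂ - (starRingEnd ℂ) ζ₂)) /
      (d * ((starRingEnd ℂ) ζ₁ - ζ₂)) := by
    rw [hK_real, Complex.ofReal_div, hdd, ← hb]
  have hAc : ((A : ℝ) : ℂ) = ((ζ₁ - ζ₂) * e) / (d * ((starRingEnd ℂ) ζ₁ - ζ₂)) := by
    rw [hA_def, habsc, _root_.map_div₀]
    simp only [hd_def, _root_.map_sub, Complex.conj_conj]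
    rw [← hd_def, ← he_def]
    field_simp
  have hzzc : ((‖ζ₁ - ζ₂‖ ^ 2 : ℝ) : ℂ) = (ζ₁ - ζ₂) * e := by
    rw [habsc, he_conj]
  have hK'c : ((K' : ℝ) : ℂ) = -((ζ₁ - (starRingEnd ℂ) ζ₁) * (ζ₂ - (starRingEnd ℂ) ζ₂)) /
      ((ζ₁ - ζ₂) * e) := by
    rw [hK'_def, Complex.ofReal_div, hzzc, hb]
    push_cast
    ring
  -- more conjugation facts
  have hd0' : ζ₁ - (starRingEnd ℂ) ζ₂ ≠ 0 := by rw [← hd_def]; exact hd0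
  have he0' : (starRingEnd ℂ) ζ₁ - (starRingEnd ℂ) ζ₂ ≠ 0 := by rw [← he_def]; exact he0
  have hconj_e : (starRingEnd ℂ) e = ζ₁ - ζ₂ := by rw [he_conj, Complex.conj_conj]
  have hconj_d : (starRingEnd ℂ) d = (starRingEnd ℂ) ζ₁ - ζ₂ := by
    rw [hd_def, _root_.map_sub, Complex.conj_conj]
  have hAmu : (e / d) * (starRingEnd ℂ) (e / d) = ((A : ℝ) : ℂ) := by
    rw [_root_.map_div₀, hconj_e, hconj_d, hAc, div_mul_div_comm, mul_comm e (ζ₁ - ζ₂)]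
  have hcd0 : (starRingEnd ℂ) d ≠ 0 := by rw [hconj_d]; exact hdc0
  have hce0 : (starRingEnd ℂ) e ≠ 0 := by rw [hconj_e]; exact hzz
  have hnuA : ((A : ℝ) : ℂ) * ((d / e) * (starRingEnd ℂ) (d / e)) = 1 := by
    rw [← hAmu, _root_.map_div₀, _root_.map_div₀]
    field_simp
  have hKl : l + (starRingEnd ℂ) l - l * (starRingEnd ℂ) l = -((K : ℝ) : ℂ) := by
    rw [hl_def, _root_.map_div₀, _root_.map_sub, Complex.conj_conj, hconj_d, hKc, hd_def]
    field_simp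
    ring
  have hK'm : (ζ₁ - (starRingEnd ℂ) ζ₁) / e + (starRingEnd ℂ) ((ζ₁ - (starRingEnd ℂ) ζ₁) / e)
      + (ζ₁ - (starRingEnd ℂ) ζ₁) / e * (starRingEnd ℂ) ((ζ₁ - (starRingEnd ℂ) ζ₁) / e)
      = ((K' : ℝ) : ℂ) := by
    rw [_root_.map_div₀, _root_.map_sub, Complex.conj_conj, hconj_e, hK'c, he_def]
    field_simp
    ring
  have key1 : (1 : ℂ) - l = e / d := by
    rw [hl_def]
    field_simp [hd0]
    rw [hd_def, he_def]
    ring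
  have key2 : (1 : ℂ) + (ζ₁ - (starRingEnd ℂ) ζ₁) / e = d / e := by
    field_simp [he0]
    rw [hd_def, he_def]
    ring
  have habs_comm : ∀ x y : Fin m → ℂ, ‖herm x y‖ = ‖herm y x‖ :=
    fun x y => by rw [← herm_conj y x, Complex.norm_conj]
  -- the inverse map
  set S : (Fin m → ℂ) → (Fin m → ℂ) := fun w a =>
    ((Real.sqrt (A / (1 + K' * (‖herm w u₁‖)^2)) : ℝ) : ℂ) * (d / e) *
      (w a + (ζ₁ - (starRingEnd ℂ) ζ₁) / e * herm w u₁ * u₁ a) with hS_def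
  have hS : ∀ w a, S w a =
      ((Real.sqrt (A / (1 + K' * (‖herm w u₁‖)^2)) : ℝ) : ℂ) * (d / e) *
      (w a + (ζ₁ - (starRingEnd ℂ) ζ₁) / e * herm w u₁ * u₁ a) := fun w a => rfl
  clear_value S
  have hmainT : ∀ v : Fin m → ℂ, herm v v = 1 → herm (T v) (T v) = 1 ∧ S (T v) = v := by
    intro v hv
    set s : ℂ := herm v u₁ with hs_def
    have hsu : herm u₁ v = (starRingEnd ℂ) s := by rw [hs_def, herm_conj]
    set σ : ℝ := (‖s‖)^2 with hσ_def
    have hσc : ((σ : ℝ) : ℂ) = s * (starRingEnd ℂ) s := habsc s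
    have hσ1 : σ ≤ 1 := herm_cs v u₁ hv hu1
    have hσ0 : 0 ≤ σ := sq_nonneg _
    have hden : 0 < 1 + K * σ := by nlinarith
    set c : ℝ := (Real.sqrt (A * (1 + K * σ)))⁻¹ with hc_def
    have hcpos : 0 < c := by
      rw [hc_def]; exact inv_pos.mpr (Real.sqrt_pos.mpr (by positivity))
    have hc2 : c^2 * (A * (1 + K * σ)) = 1 := by
      rw [hc_def, inv_pow, Real.sq_sqrt (by positivity : (0:ℝ) ≤ A * (1 + K * σ))]
      exact inv_mul_cancel₀ (by positivity)
    clear_value s σ c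
    have habs_uv : ‖herm u₁ v‖ = ‖s‖ := by
      rw [hs_def, ← herm_conj v u₁, Complex.norm_conj]
    have hTv : T v = fun a => ((c:ℝ):ℂ) * (e / d) * v a
        + (-(((c:ℝ):ℂ) * (e / d) * l * s)) * u₁ a := by
      funext a
      rw [hT v a, habs_uv, ← hσ_def, ← hc_def, ← hs_def]
      ring
    have hTu : herm (T v) u₁ = ((c:ℝ):ℂ) * (e / d) * (e / d) * s := by
      rw [hTv, herm_left, ← hs_def, hu1]
      linear_combination (((c:ℝ):ℂ) * (e / d) * s) * key1
    have hc2C : ((c:ℝ):ℂ)^2 * (((A:ℝ):ℂ) * (1 + ((K:ℝ):ℂ) * (s * (starRingEnd ℂ) s))) = 1 := by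
      have hcast := congrArg (Complex.ofReal) hc2
      push_cast at hcast
      rw [hσc] at hcast
      exact hcast
    have hTT : herm (T v) (T v) = 1 := by
      rw [hTv, herm_left, herm_right, herm_right, ← hs_def, hsu, hv, hu1]
      simp only [_root_.map_mul, _root_.map_neg, Complex.conj_ofReal]
      linear_combination hc2C + (((c:ℝ):ℂ)^2 * (1 + ((K:ℝ):ℂ) * (s * (starRingEnd ℂ) s))) * hAmu
        - (((c:ℝ):ℂ)^2 * (e/d) * ((starRingEnd ℂ) (e/d)) * (s * (starRingEnd ℂ) s)) * hKl
    refine ⟨hTT, ?_⟩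
    -- now the left inverse computation
    have had0 : ‖d‖ ≠ 0 := fun h => hd0 (norm_eq_zero.mp h)
    have habsTu : (‖herm (T v) u₁‖)^2 = c^2 * A^2 * σ := by
      rw [hTu]
      simp only [norm_mul, norm_div, Complex.norm_real, Real.norm_eq_abs, habse]
      rw [abs_of_pos hcpos, hA_real, hσ_def]
      field_simp
    set τ : ℝ := c^2 * A^2 * σ with hτ_def
    have hτ0 : 0 ≤ τ := by
      rw [hτ_def]
      exact mul_nonneg (mul_nonneg (sq_nonneg c) (sq_nonneg A)) hσ0
    have hdenτ : 0 < 1 + K' * τ := by nlinarith [mul_nonneg hK'pos hτ0]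
    set c' : ℝ := Real.sqrt (A / (1 + K' * τ)) with hc'_def
    clear_value τ c'
    have hc'pos : 0 < c' := by rw [hc'_def]; exact Real.sqrt_pos.mpr (by positivity)
    have hc'2 : c'^2 * (1 + K' * τ) = A := by
      rw [hc'_def, Real.sq_sqrt (le_of_lt (by positivity : (0:ℝ) < A / (1 + K' * τ)))]
      field_simp
    have hkey : A * c^2 = 1 + K' * τ := by
      rw [hτ_def]; linear_combination hc2 - (c^2*A*σ) * hK'A
    have hcc' : c' * c = 1 := by
      have h5 : (c'^2 * c^2 - 1) * (1 + K' * τ) = 0 := by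
        linear_combination c^2 * hc'2 + hkey
      have h6 : c'^2 * c^2 = 1 := by
        have h5' := (mul_eq_zero.mp h5).resolve_right (ne_of_gt hdenτ)
        linarith
      have h7 : (c' * c - 1) * (c' * c + 1) = 0 := by linear_combination h6
      have h8 := (mul_eq_zero.mp h7).resolve_right (by nlinarith [mul_pos hc'pos hcpos])
      linarith
    have hcc'C : ((c':ℝ):ℂ) * ((c:ℝ):ℂ) = 1 := by exact_mod_cast congrArg Complex.ofReal hcc'
    funext a
    rw [hS (T v) a, habsTu, ← hc'_def, hTu, hTv]
    simp only []
    rw [hl_def]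
    have hcC0 : ((c:ℝ):ℂ) ≠ 0 := by
      simpa using (ne_of_gt hcpos)
    have hc'eq : ((c':ℝ):ℂ) = ((c:ℝ):ℂ)⁻¹ := eq_inv_of_mul_eq_one_left hcc'C
    rw [hc'eq]
    field_simp
    ring
  have hmainS : ∀ w : Fin m → ℂ, herm w w = 1 → herm (S w) (S w) = 1 ∧ T (S w) = w := by
    intro w hw
    set t : ℂ := herm w u₁ with ht_def
    have htu : herm u₁ w = (starRingEnd ℂ) t := by rw [ht_def, herm_conj]
    set τ : ℝ := (‖t‖)^2 with hτ_def
    have hτc : ((τ : ℝ) : ℂ) = t * (starRingEnd ℂ) t := habsc t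
    have hτ0 : 0 ≤ τ := sq_nonneg _
    have hdenτ : 0 < 1 + K' * τ := by nlinarith [mul_nonneg hK'pos hτ0]
    set c' : ℝ := Real.sqrt (A / (1 + K' * τ)) with hc'_def
    clear_value t τ c'
    have hc'pos : 0 < c' := by rw [hc'_def]; exact Real.sqrt_pos.mpr (by positivity)
    have hc'2 : c'^2 * (1 + K' * τ) = A := by
      rw [hc'_def, Real.sq_sqrt (le_of_lt (by positivity : (0:ℝ) < A / (1 + K' * τ)))]
      field_simp
    have hSw : S w = fun a => ((c':ℝ):ℂ) * (d / e) * w a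
        + (((c':ℝ):ℂ) * (d / e) * ((ζ₁ - (starRingEnd ℂ) ζ₁) / e) * t) * u₁ a := by
      funext a
      rw [hS w a, ← ht_def, ← hτ_def, ← hc'_def]
      ring
    have hSu : herm (S w) u₁ = ((c':ℝ):ℂ) * (d / e) * (d / e) * t := by
      rw [hSw, herm_left, ← ht_def, hu1]
      linear_combination (((c':ℝ):ℂ) * (d / e) * t) * key2
    have hc'2C : ((c':ℝ):ℂ)^2 * (1 + ((K':ℝ):ℂ) * (t * (starRingEnd ℂ) t)) = ((A:ℝ):ℂ) := by
      have hcast := congrArg Complex.ofReal hc'2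
      push_cast at hcast
      rw [hτc] at hcast
      exact hcast
    have hSS : herm (S w) (S w) = 1 := by
      rw [hSw, herm_left, herm_right, herm_right, ← ht_def, htu, hw, hu1]
      simp only [_root_.map_mul, Complex.conj_ofReal]
      linear_combination ((d/e) * (starRingEnd ℂ) (d/e)) * hc'2C + hnuA
        + (((c':ℝ):ℂ)^2 * ((d/e) * (starRingEnd ℂ) (d/e)) * (t * (starRingEnd ℂ) t)) * hK'm
    refine ⟨hSS, ?_⟩
    have had0 : ‖d‖ ≠ 0 := fun h => hd0 (norm_eq_zero.mp h)
    have haz0 : ‖ζ₁ - ζ₂‖ ≠ 0 := fun h => hzz (norm_eq_zero.mp h)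
    have hA0 : A ≠ 0 := ne_of_gt hApos
    have habsSu : (‖herm (S w) u₁‖)^2 = c'^2 * τ / A^2 := by
      rw [hSu]
      simp only [norm_mul, norm_div, Complex.norm_real, Real.norm_eq_abs, habse]
      rw [abs_of_pos hc'pos, hA_real, hτ_def]
      field_simp
    set σw : ℝ := c'^2 * τ / A^2 with hσw_def
    have hidw : (1 + K * σw) * (1 + K' * τ) = 1 := by
      rw [hσw_def]
      field_simp
      linear_combination (K*τ)*hc'2 + (A*τ)*hK'A
    have hden2 : 0 < 1 + K * σw := by
      by_contra hcon
      push_neg at hcon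
      nlinarith
    set c₂ : ℝ := (Real.sqrt (A * (1 + K * σw)))⁻¹ with hc₂_def
    clear_value σw c₂
    have hc₂pos : 0 < c₂ := by
      rw [hc₂_def]; exact inv_pos.mpr (Real.sqrt_pos.mpr (by positivity))
    have hc₂2 : c₂^2 * (A * (1 + K * σw)) = 1 := by
      rw [hc₂_def, inv_pow, Real.sq_sqrt (le_of_lt (by positivity : (0:ℝ) < A * (1 + K * σw)))]
      exact inv_mul_cancel₀ (by positivity)
    have hc₂c' : c₂ * c' = 1 := by
      have hL : c₂^2 * c'^2 * ((A * (1 + K * σw)) * (1 + K' * τ)) = A := by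
        linear_combination (c'^2 * (1 + K' * τ)) * hc₂2 + hc'2
      have hR : c₂^2 * c'^2 * ((A * (1 + K * σw)) * (1 + K' * τ))
          = 1 * ((A * (1 + K * σw)) * (1 + K' * τ)) := by
        rw [one_mul, hL]
        linear_combination (-A) * hidw
      have h6 : c₂^2 * c'^2 = 1 :=
        mul_right_cancel₀ (ne_of_gt (mul_pos (mul_pos hApos hden2) hdenτ)) hR
      have h7 : (c₂ * c' - 1) * (c₂ * c' + 1) = 0 := by linear_combination h6
      have h8 := (mul_eq_zero.mp h7).resolve_right (by nlinarith [mul_pos hc₂pos hc'pos])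
      linarith
    have hcc : ((c₂:ℝ):ℂ) * ((c':ℝ):ℂ) = 1 := by exact_mod_cast congrArg Complex.ofReal hc₂c'
    funext a
    rw [hT (S w) a, habs_comm u₁ (S w), habsSu, ← hc₂_def, hSu, hSw]
    simp only []
    rw [hl_def]
    have hc'C0 : ((c':ℝ):ℂ) ≠ 0 := by simpa using (ne_of_gt hc'pos)
    have hc₂eq : ((c₂:ℝ):ℂ) = ((c':ℝ):ℂ)⁻¹ := eq_inv_of_mul_eq_one_left hcc
    rw [hc₂eq]
    field_simp
    ring
  exact Set.InvOn.bijOn ⟨fun v hv => (hmainT v hv).2, fun w hw => (hmainS w hw).2⟩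
    (fun v hv => (hmainT v hv).1) (fun w hw => (hmainS w hw).1)

end
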